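/- Let P be a group and X ≤ P an extraspecial p-subgroup with [P,X] ≤ Z(X). Then P = X · C_P(X). -/

import Mathlib

/-- `G` is extraspecial for the prime `p`: its center has order `p` and `G/Z(G)`
is elementary abelian (nontrivial, abelian of exponent `p`). -/
def IsExtraspecial (p : ℕ) (G : Type*) [Group G] : Prop :=
  Nat.card (Subgroup.center G) = p ∧
  Nontrivial (G ⧸ Subgroup.center G) ∧
  (∀ a b : G ⧸ Subgroup.center G, a * b = b * a) ∧
  (∀ a : G ⧸ Subgroup.center G, a ^ p = 1)

open scoped commutatorElement IsMulCommutative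

private theorem dualCard (p : ℕ) [Fact p.Prime] (W : Type*) [AddCommGroup W] [Finite W]
    [Module (ZMod p) W] : Nat.card (W →ₗ[ZMod p] ZMod p) = Nat.card W := by
  have : Module.Finite (ZMod p) W := Module.Finite.of_finite
  have fV := Fintype.ofFinite W
  have finA : Finite (W →+ ZMod p) :=
    Finite.of_injective (fun f : W →+ ZMod p => (f : W → ZMod p)) DFunLike.coe_injective
  have finD : Finite (W →ₗ[ZMod p] ZMod p) :=
    Finite.of_injective (LinearMap.toAddMonoidHom) LinearMap.toAddMonoidHom_injective
  have fD := Fintype.ofFinite (Module.Dual (ZMod p) W)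
  have h1 : Nat.card (Module.Dual (ZMod p) W) =
      p ^ Module.finrank (ZMod p) (Module.Dual (ZMod p) W) := by
    rw [Nat.card_eq_fintype_card, Module.card_eq_pow_finrank (K := ZMod p), ZMod.card]
  have h2 : Nat.card W = p ^ Module.finrank (ZMod p) W := by
    rw [Nat.card_eq_fintype_card, Module.card_eq_pow_finrank (K := ZMod p), ZMod.card]
  rw [show (W →ₗ[ZMod p] ZMod p) = Module.Dual (ZMod p) W from rfl, h1,
    Subspace.dual_finrank_eq, ← h2]

private theorem cardHomLe (p : ℕ) [Fact p.Prime] (V C : Type*) [Group V] [Finite V]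
    (hVc : ∀ a b : V, a * b = b * a) (hV : ∀ v : V, v ^ p = 1) [CommGroup C]
    (hC : Nat.card C = p) : Nat.card (V →* C) ≤ Nat.card V := by
  letI : CommGroup V := { (inferInstance : Group V) with mul_comm := hVc }
  have hp : p.Prime := Fact.out
  have : NeZero p := ⟨hp.ne_zero⟩
  have e : C ≃* Multiplicative (ZMod p) :=
    mulEquivOfPrimeCardEq hC (by simp [Nat.card_eq_fintype_card, ZMod.card])
  letI : Module (ZMod p) (Additive V) :=
    AddCommGroup.zmodModule (by intro x; show (Additive.toMul x) ^ p = 1; exact hV _)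
  have finA : Finite (Additive V →+ ZMod p) :=
    Finite.of_injective (fun f : Additive V →+ ZMod p => (f : Additive V → ZMod p))
      DFunLike.coe_injective
  have i : Function.Injective
      (fun f : (V →* C) =>
        ((MonoidHom.toAdditiveLeft (e.toMonoidHom.comp f)).toZModLinearMap p)) := by
    intro f g h
    ext v
    have := congrArg (fun k : Additive V →ₗ[ZMod p] ZMod p =>
      k.toAddMonoidHom (Additive.ofMul v)) h
    simpa using e.injective (by simpa using this)
  have finL : Finite (Additive V →ₗ[ZMod p] ZMod p) :=
    Finite.of_injective (fun f : Additive V →ₗ[ZMod p] ZMod p => f.toAddMonoidHom)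
      LinearMap.toAddMonoidHom_injective
  calc Nat.card (V →* C) ≤ Nat.card (Additive V →ₗ[ZMod p] ZMod p) :=
        Nat.card_le_card_of_injective _ i
    _ = Nat.card V := dualCard p (Additive V)

private theorem comm_right {P : Type*} [Group P] (a x y : P)
    (h : x * ⁅a, y⁆ = ⁅a, y⁆ * x) : ⁅a, x * y⁆ = ⁅a, x⁆ * ⁅a, y⁆ := by
  have hc : Commute x ⁅a, y⁆ := h
  calc ⁅a, x * y⁆ = a * x * a⁻¹ * (⁅a, y⁆ * x⁻¹) := by
        simp only [commutatorElement_def]; group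
    _ = a * x * a⁻¹ * (x⁻¹ * ⁅a, y⁆) := by rw [hc.inv_left.symm.eq]
    _ = ⁅a, x⁆ * ⁅a, y⁆ := by simp only [commutatorElement_def]; group

private theorem comm_left {P : Type*} [Group P] (a b w : P)
    (h1 : a * ⁅b, w⁆ = ⁅b, w⁆ * a) (h2 : ⁅b, w⁆ * ⁅a, w⁆ = ⁅a, w⁆ * ⁅b, w⁆) :
    ⁅a * b, w⁆ = ⁅a, w⁆ * ⁅b, w⁆ := by
  calc ⁅a * b, w⁆ = a * ⁅b, w⁆ * a⁻¹ * ⁅a, w⁆ := by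
        simp only [commutatorElement_def]; group
    _ = ⁅b, w⁆ * a * a⁻¹ * ⁅a, w⁆ := by rw [← h1]
    _ = ⁅b, w⁆ * ⁅a, w⁆ := by group
    _ = ⁅a, w⁆ * ⁅b, w⁆ := h2

private def commHom {P : Type*} [Group P] (X : Subgroup P)
    (hXC : ∀ a x : P, x ∈ X → ⁅a, x⁆ ∈ X ⊓ Subgroup.centralizer (X : Set P)) (a : P) :
    ↥X →* ↥(Subgroup.center ↥X) where
  toFun x := ⟨⟨⁅a, ↑x⁆, (hXC a ↑x x.2).1⟩, by
    rw [Subgroup.mem_center_iff]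
    intro z
    apply Subtype.ext
    push_cast
    exact Subgroup.mem_centralizer_iff.mp (hXC a ↑x x.2).2 ↑z z.2⟩
  map_one' := by
    apply Subtype.ext; apply Subtype.ext
    show ⁅a, ((1 : ↥X) : P)⁆ = 1
    simp
  map_mul' x y := by
    apply Subtype.ext; apply Subtype.ext
    show ⁅a, ((x * y : ↥X) : P)⁆ = ⁅a, (x : P)⁆ * ⁅a, (y : P)⁆
    push_cast
    exact comm_right (P := P) a ↑x ↑y (Subgroup.mem_centralizer_iff.mp (hXC a ↑y y.2).2 ↑x x.2)

/-- If `X ≤ P` is an extraspecial `p`-subgroup with `[P,X] ≤ Z(X)`,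
then `P = X · C_P(X)`. -/
theorem stmt_6 {p : ℕ} (hp : p.Prime) {P : Type*} [Group P] [Finite P]
    (X : Subgroup P) (hX : IsExtraspecial p X)
    (hcomm : ⁅(⊤ : Subgroup P), X⁆ ≤ X ⊓ Subgroup.centralizer (X : Set P)) :
    ∀ g : P, ∃ x ∈ X, ∃ c ∈ Subgroup.centralizer (X : Set P), g = x * c := by
  obtain ⟨hcard, hnontriv, hQcomm, hexp⟩ := hX
  have hpI : Fact p.Prime := ⟨hp⟩
  have hXC : ∀ a x : P, x ∈ X → ⁅a, x⁆ ∈ X ⊓ Subgroup.centralizer (X : Set P) :=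
    fun a x hx => hcomm (Subgroup.commutator_mem_commutator (Subgroup.mem_top a) hx)
  -- the commutator subgroup of X equals its center
  have hKc : commutator ↥X = Subgroup.center ↥X := by
    have h1 : commutator ↥X ≤ Subgroup.center ↥X := by
      rw [commutator_def]
      refine Subgroup.commutator_le.mpr fun a _ b _ => ?_
      have : ((QuotientGroup.mk' (Subgroup.center ↥X)) ⁅a, b⁆ :
          ↥X ⧸ Subgroup.center ↥X) = 1 := by
        rw [map_commutatorElement]
        exact commutatorElement_eq_one_iff_mul_comm.mpr (hQcomm _ _)
      simpa only [QuotientGroup.mk'_apply, QuotientGroup.eq_one_iff] using this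
    have h2 : commutator ↥X ≠ ⊥ := by
      intro hbot
      have hab : ∀ a b : ↥X, a * b = b * a := by
        intro a b
        have : ⁅a, b⁆ ∈ commutator ↥X := by
          rw [commutator_def]
          exact Subgroup.commutator_mem_commutator (Subgroup.mem_top _) (Subgroup.mem_top _)
        rw [hbot, Subgroup.mem_bot] at this
        exact commutatorElement_eq_one_iff_mul_comm.mp this
      have htop : Subgroup.center ↥X = ⊤ := by
        rw [eq_top_iff]
        intro x _
        exact Subgroup.mem_center_iff.mpr fun g => hab g x
      have : Subsingleton (↥X ⧸ Subgroup.center ↥X) :=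
        htop ▸ QuotientGroup.subsingleton_quotient_top
      exact false_of_nontrivial_of_subsingleton (↥X ⧸ Subgroup.center ↥X)
    have hKcard : Nat.card ((commutator ↥X).subgroupOf (Subgroup.center ↥X)) =
        Nat.card (commutator ↥X) :=
      Nat.card_congr (Subgroup.subgroupOfEquivOfLe h1).toEquiv
    have hdvd : Nat.card ((commutator ↥X).subgroupOf (Subgroup.center ↥X)) ∣ p := by
      rw [← hcard]
      exact Subgroup.card_subgroup_dvd_card _
    have hne1 : Nat.card (commutator ↥X) ≠ 1 := fun h =>
      h2 (Subgroup.card_eq_one.mp h)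
    have hcp : Nat.card ((commutator ↥X).subgroupOf (Subgroup.center ↥X)) = p := by
      rcases (Nat.Prime.eq_one_or_self_of_dvd hp _ hdvd) with h | h
      · exact absurd (hKcard ▸ h) hne1
      · exact h
    have htop2 : (commutator ↥X).subgroupOf (Subgroup.center ↥X) = ⊤ :=
      Subgroup.eq_top_of_card_eq _ (by rw [hcp, hcard])
    exact le_antisymm h1 (Subgroup.subgroupOf_eq_top.mp htop2)
  -- every `commHom` kills the center
  have hker : ∀ (a : P) (z : ↥X), z ∈ Subgroup.center ↥X → commHom X hXC a z = 1 := by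
    intro a z hz
    have hle : commutator ↥X ≤ (commHom X hXC a).ker := by
      rw [commutator_def]
      refine Subgroup.commutator_le.mpr fun g1 _ g2 _ => ?_
      rw [MonoidHom.mem_ker, map_commutatorElement]
      exact commutatorElement_eq_one_iff_mul_comm.mpr (mul_comm _ _)
    exact hle (hKc ▸ hz)
  -- the homomorphism `X → Hom(X, Z(X))`
  let Ψ : ↥X →* (↥X →* ↥(Subgroup.center ↥X)) :=
    { toFun := fun x => commHom X hXC ↑x
      map_one' := by
        refine MonoidHom.ext fun w => ?_
        apply Subtype.ext; apply Subtype.ext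
        show ⁅((1 : ↥X) : P), (w : P)⁆ = (((1 : ↥X →* ↥(Subgroup.center ↥X)) w : ↥X) : P)
        simp
      map_mul' := by
        intro x y
        refine MonoidHom.ext fun w => ?_
        apply Subtype.ext; apply Subtype.ext
        show ⁅((x * y : ↥X) : P), (w : P)⁆ = ⁅(x : P), (w : P)⁆ * ⁅(y : P), (w : P)⁆
        push_cast
        exact comm_left (P := P) ↑x ↑y ↑w
          (Subgroup.mem_centralizer_iff.mp (hXC ↑y ↑w w.2).2 ↑x x.2)
          ((Subgroup.mem_centralizer_iff.mp (hXC ↑y ↑w w.2).2 ⁅(↑x : P), ↑w⁆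
            (hXC ↑x ↑w w.2).1).symm) }
  have hkerΨ : Ψ.ker = Subgroup.center ↥X := by
    ext x
    simp only [MonoidHom.mem_ker]
    constructor
    · intro h
      rw [Subgroup.mem_center_iff]
      intro w
      have h1 : commHom X hXC ↑x w = 1 := by
        have h' : Ψ x w = (1 : ↥X →* ↥(Subgroup.center ↥X)) w := by rw [h]
        exact h'
      have h2 : ⁅(x : P), (w : P)⁆ = 1 := congrArg (fun t : ↥(Subgroup.center ↥X) =>
        ((t : ↥X) : P)) h1
      have := commutatorElement_eq_one_iff_mul_comm.mp h2
      apply Subtype.ext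
      push_cast
      exact this.symm
    · intro hx
      refine MonoidHom.ext fun w => ?_
      apply Subtype.ext; apply Subtype.ext
      show ⁅(x : P), (w : P)⁆ = (((1 : ↥X →* ↥(Subgroup.center ↥X)) w : ↥X) : P)
      rw [commutatorElement_eq_one_iff_mul_comm.mpr]
      · simp
      · have := Subgroup.mem_center_iff.mp hx w
        exact congrArg (Subtype.val) this.symm
  -- counting
  have hcardRange : Nat.card Ψ.range = Nat.card (↥X ⧸ Subgroup.center ↥X) :=
    calc Nat.card Ψ.range = Nat.card (↥X ⧸ Ψ.ker) :=
          (Nat.card_congr (QuotientGroup.quotientKerEquivRange Ψ).toEquiv).symm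
      _ = Nat.card (↥X ⧸ Subgroup.center ↥X) :=
          Nat.card_congr (QuotientGroup.quotientMulEquivOfEq hkerΨ).toEquiv
  let S2 : Subgroup (↥X →* ↥(Subgroup.center ↥X)) :=
    { carrier := {f | ∀ z : ↥X, z ∈ Subgroup.center ↥X → f z = 1}
      one_mem' := fun _ _ => rfl
      mul_mem' := by
        intro f g hf hg z hz
        rw [MonoidHom.mul_apply, hf z hz, hg z hz, mul_one]
      inv_mem' := by
        intro f hf z hz
        rw [MonoidHom.inv_apply, hf z hz, inv_one] }
  have hrange_le : Ψ.range ≤ S2 := by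
    rintro f ⟨x, rfl⟩ z hz
    exact hker ↑x z hz
  have finT : Finite ((↥X ⧸ Subgroup.center ↥X) →* ↥(Subgroup.center ↥X)) :=
    Finite.of_injective
      (fun f : (↥X ⧸ Subgroup.center ↥X) →* ↥(Subgroup.center ↥X) =>
        (f : (↥X ⧸ Subgroup.center ↥X) → ↥(Subgroup.center ↥X)))
      DFunLike.coe_injective
  have finT2 : Finite (↥X →* ↥(Subgroup.center ↥X)) :=
    Finite.of_injective
      (fun f : ↥X →* ↥(Subgroup.center ↥X) => (f : ↥X → ↥(Subgroup.center ↥X)))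
      DFunLike.coe_injective
  have hinj : Function.Injective (fun f : S2 =>
      (QuotientGroup.lift (Subgroup.center ↥X)
        (f : ↥X →* ↥(Subgroup.center ↥X)) (fun z hz => f.2 z hz) :
        (↥X ⧸ Subgroup.center ↥X) →* ↥(Subgroup.center ↥X))) := by
    intro f1 f2 h
    apply Subtype.ext
    refine MonoidHom.ext fun w => ?_
    have := congrArg (fun k : (↥X ⧸ Subgroup.center ↥X) →* ↥(Subgroup.center ↥X) =>
      k (QuotientGroup.mk w)) h
    exact this
  have hS2card : Nat.card S2 ≤ Nat.card (↥X ⧸ Subgroup.center ↥X) :=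
    calc Nat.card S2 ≤ Nat.card ((↥X ⧸ Subgroup.center ↥X) →* ↥(Subgroup.center ↥X)) :=
          Nat.card_le_card_of_injective _ hinj
      _ ≤ Nat.card (↥X ⧸ Subgroup.center ↥X) :=
          cardHomLe p _ _ hQcomm hexp hcard
  have hEq : Ψ.range = S2 :=
    Subgroup.eq_of_le_of_card_ge hrange_le (by rw [hcardRange]; exact hS2card)
  -- conclusion
  intro g
  have hgS2 : commHom X hXC g ∈ S2 := fun z hz => hker g z hz
  obtain ⟨x, hx⟩ : commHom X hXC g ∈ Ψ.range := hEq ▸ hgS2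
  have hxw : ∀ w : ↥X, ⁅(x : P), (w : P)⁆ = ⁅g, (w : P)⁆ := by
    intro w
    have : Ψ x w = commHom X hXC g w := by rw [hx]
    exact congrArg (fun t : ↥(Subgroup.center ↥X) => ((t : ↥X) : P)) this
  refine ⟨↑x, x.2, (↑x)⁻¹ * g, ?_, by group⟩
  rw [Subgroup.mem_centralizer_iff]
  intro m hm
  have h := hxw ⟨m, hm⟩
  rw [commutatorElement_def, commutatorElement_def] at h
  have h2 : (x : P) * m * (↑x)⁻¹ = g * m * g⁻¹ := mul_right_cancel h
  calc m * ((↑x)⁻¹ * g) = (↑x)⁻¹ * ((x : P) * m * (↑x)⁻¹) * g := by group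
    _ = (↑x)⁻¹ * (g * m * g⁻¹) * g := by rw [h2]
    _ = (↑x)⁻¹ * g * m := by group
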